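/- With the hypotheses of the previous lemma (continuous φ_i on [-1,1]^ℕ agreeing with the i-th coordinate on nondecreasing sequences and pointwise increasing in i), there exist indices k_0 < k_1 < k_2 < ... and points y^1, y^2, ... ∈ [-1,1]^ℕ, where y^{j+1} is the indicator sequence of the interval [k_j, k_{j+1}), such that φ_{k_m}(y^{j+1}) > 1/2 whenever j + 1 ≤ m. -/
import Mathlib


/-- The cube `[-1,1]^ℕ` with the product topology. -/
abbrev Cube : Type := ℕ → Set.Icc (-1 : ℝ) 1

/-- The indicator sequence of the interval `[a, b)`, as an element of `[-1,1]^ℕ`. -/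
def indicatorSeq (a b : ℕ) : Cube := fun n =>
  if a ≤ n ∧ n < b then ⟨1, by norm_num⟩ else ⟨0, by norm_num⟩

/-- Under the hypotheses of Lemma 4.1 there are indices `k_0 < k_1 < ⋯` such that,
with `y^{j+1}` the indicator sequence of `[k_j, k_{j+1})`, one has
`φ_{k_m}(y^{j+1}) > 1/2` whenever `j + 1 ≤ m`. -/
theorem stmt_11 (φ : ℕ → Cube → ℝ) (hcont : ∀ i, Continuous (φ i))
    (hmono : ∀ (i : ℕ) (x : Cube), Monotone (fun n => (x n : ℝ)) → φ i x = (x i : ℝ))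
    (hinc : ∀ (i : ℕ) (x : Cube), φ i x ≤ φ (i + 1) x) :
    ∃ k : ℕ → ℕ, StrictMono k ∧
      ∀ j m : ℕ, j + 1 ≤ m → 1 / 2 < φ (k m) (indicatorSeq (k j) (k (j + 1))) := by
  have hmonoφ : ∀ x : Cube, Monotone (fun i => φ i x) := fun x =>
    monotone_nat_of_le_succ (fun i => hinc i x)
  have key : ∀ a : ℕ, ∃ b, a < b ∧ 1 / 2 < φ a (indicatorSeq a b) := by
    intro a
    set x : Cube := fun n => if a ≤ n then ⟨1, by norm_num⟩ else ⟨0, by norm_num⟩ with hx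
    have hmx : Monotone (fun n => ((x n : ℝ))) := by
      intro n m hnm
      simp only [hx]
      split_ifs with h1 h2 <;> try norm_num
      exact absurd (h1.trans hnm) h2
    have hval : φ a x = 1 := by
      rw [hmono a x hmx]; simp [hx]
    have htend : Filter.Tendsto (fun b => indicatorSeq a b) Filter.atTop (nhds x) := by
      rw [tendsto_pi_nhds]
      intro n
      apply Filter.Tendsto.congr' _ tendsto_const_nhds
      filter_upwards [Filter.eventually_gt_atTop n] with b hb
      simp only [indicatorSeq, hx]
      by_cases h : a ≤ n
      · rw [if_pos (show a ≤ n ∧ n < b from ⟨h, hb⟩), if_pos h]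
      · rw [if_neg (show ¬(a ≤ n ∧ n < b) from fun hc => h hc.1), if_neg h]
    have hφtend := ((hcont a).tendsto x).comp htend
    rw [hval] at hφtend
    have h2 : ∀ᶠ b in Filter.atTop, 1 / 2 < φ a (indicatorSeq a b) :=
      hφtend.eventually (eventually_gt_nhds (by norm_num))
    obtain ⟨b, hb1, hb2⟩ := (h2.and (Filter.eventually_gt_atTop a)).exists
    exact ⟨b, hb2, hb1⟩
  choose f hf1 hf2 using key
  let k : ℕ → ℕ := fun j => Nat.rec 0 (fun _ prev => f prev) j
  have hks : ∀ j, k (j + 1) = f (k j) := fun j => rfl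
  have hkmono : StrictMono k := strictMono_nat_of_lt_succ (fun j => hf1 (k j))
  refine ⟨k, hkmono, fun j m hjm => ?_⟩
  calc 1 / 2 < φ (k j) (indicatorSeq (k j) (k (j + 1))) := by rw [hks]; exact hf2 (k j)
    _ ≤ φ (k m) (indicatorSeq (k j) (k (j + 1))) :=
      hmonoφ _ (hkmono.monotone (le_trans (Nat.le_succ j) hjm))
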